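/- Let A be a finite-dimensional selfinjective algebra over a field K, I a two-sided ideal of A, and e an idempotent of A with l_A(I) = eI. Then the socle of A (as a two-sided ideal) is contained in I. -/

import Mathlib

/-- The left annihilator of a subset of a ring. -/
def lAnn {A : Type*} [Ring A] (S : Set A) : Set A := {a : A | ∀ x ∈ S, a * x = 0}

/-- The socle of `A` as a right `A`-module: the sup of all simple (atomic) right ideals. -/
def rightSocle (A : Type*) [Ring A] : Submodule Aᵐᵒᵖ A :=
  sSup {m : Submodule Aᵐᵒᵖ A | IsAtom m}

/-- Let `A` be a finite-dimensional selfinjective algebra over a field `K`,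
`I` a two-sided ideal of `A`, and `e` an idempotent of `A` with `l_A(I) = eI`.
Then the socle of `A` is contained in `I`. -/
theorem socle_le_of_lAnn_eq
    {K A : Type*} [Field K] [Ring A] [Algebra K A] [FiniteDimensional K A]
    [Module.Injective Aᵐᵒᵖ A]
    (I : Ideal A) (hI : ∀ x ∈ I, ∀ a : A, x * a ∈ I)  -- `I` is a two-sided ideal
    (e : A) (he : IsIdempotentElem e)
    (hann : lAnn (I : Set A) = (fun x => e * x) '' (I : Set A)) :
    ((rightSocle A : Submodule Aᵐᵒᵖ A) : Set A) ⊆ (I : Set A) := by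
  -- `I` as a right ideal (submodule over `Aᵐᵒᵖ`)
  let I' : Submodule Aᵐᵒᵖ A :=
    { carrier := (I : Set A)
      add_mem' := fun ha hb => I.add_mem ha hb
      zero_mem' := I.zero_mem
      smul_mem' := fun a x hx => by
        simpa [MulOpposite.smul_eq_mul_unop] using hI x hx a.unop }
  suffices h : rightSocle A ≤ I' from fun x hx => h hx
  refine sSup_le fun m hm => ?_
  by_contra hmI
  -- the intersection of `m` and `I'` is trivial
  have hbot : m ⊓ I' = ⊥ := by
    refine hm.2 _ (lt_of_le_of_ne inf_le_left fun h => hmI ?_)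
    rw [← h]; exact inf_le_right
  set N : Submodule Aᵐᵒᵖ A := m ⊔ I' with hN
  set p : Submodule Aᵐᵒᵖ N := m.comap N.subtype with hp
  set q : Submodule Aᵐᵒᵖ N := I'.comap N.subtype with hq
  have hc : IsCompl p q := by
    constructor
    · rw [disjoint_iff]
      ext x
      simp only [Submodule.mem_inf, Submodule.mem_bot, hp, hq, Submodule.mem_comap,
        Submodule.subtype_apply]
      constructor
      · rintro ⟨h1, h2⟩
        have : (x : A) ∈ m ⊓ I' := ⟨h1, h2⟩
        rw [hbot, Submodule.mem_bot] at this
        exact Subtype.ext this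
      · rintro rfl; simp
    · rw [codisjoint_iff, eq_top_iff]
      rintro ⟨x, hx⟩ -
      rcases Submodule.mem_sup.mp hx with ⟨s, hs, i, hi, rfl⟩
      have hsN : s ∈ N := le_sup_left (α := Submodule Aᵐᵒᵖ A) hs
      have hiN : i ∈ N := le_sup_right (α := Submodule Aᵐᵒᵖ A) hi
      have : (⟨s + i, hx⟩ : N) = ⟨s, hsN⟩ + ⟨i, hiN⟩ := rfl
      rw [this]
      exact Submodule.add_mem_sup (show (⟨s, hsN⟩ : N) ∈ p from hs)
        (show (⟨i, hiN⟩ : N) ∈ q from hi)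
  -- the projection `N → A` killing `I'` and restricting to the identity on `m`
  let f : N →ₗ[Aᵐᵒᵖ] A := LinearMap.ofIsCompl hc (N.subtype.comp p.subtype) 0
  obtain ⟨g, hg⟩ := Module.Injective.out N.subtype N.injective_subtype f
  set c : A := g 1 with hcdef
  have hkey : ∀ x : A, g x = c * x := by
    intro x
    have : x = (MulOpposite.op x) • (1 : A) := by
      simp [MulOpposite.smul_eq_mul_unop]
    rw [this, map_smul, MulOpposite.smul_eq_mul_unop]
    simp
    rfl
  -- `c` annihilates `I`
  have hcl : c ∈ lAnn (I : Set A) := by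
    intro x hx
    have hxN : x ∈ N := le_sup_right (α := Submodule Aᵐᵒᵖ A) (show x ∈ I' from hx)
    have hgx : g x = f ⟨x, hxN⟩ := hg ⟨x, hxN⟩
    rw [hkey x] at hgx
    rw [hgx]
    have := LinearMap.ofIsCompl_right_apply hc (φ := N.subtype.comp p.subtype) (ψ := 0)
      (⟨⟨x, hxN⟩, show (⟨x, hxN⟩ : N) ∈ q from hx⟩ : q)
    simpa [f] using this
  -- hence `c ∈ eI ⊆ I`
  have hcI : c ∈ I := by
    have h2 := hcl
    rw [hann] at h2
    rcases h2 with ⟨i, hi, hie⟩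
    rw [← hie]
    exact I.smul_mem e hi
  have hcc : c * c = 0 := hcl c hcI
  -- `c` acts as the identity on `m`
  have hcm : ∀ s ∈ m, c * s = s := by
    intro s hs
    have hsN : s ∈ N := le_sup_left (α := Submodule Aᵐᵒᵖ A) hs
    have h1 : g s = f ⟨s, hsN⟩ := hg ⟨s, hsN⟩
    rw [hkey s] at h1
    have h2 := LinearMap.ofIsCompl_left_apply hc (φ := N.subtype.comp p.subtype) (ψ := 0)
      (⟨⟨s, hsN⟩, show (⟨s, hsN⟩ : N) ∈ p from hs⟩ : p)
    rw [h1]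
    simpa [f] using h2
  -- contradiction: `m` is nonzero
  obtain ⟨s, hs, hs0⟩ := Submodule.exists_mem_ne_zero_of_ne_bot hm.1
  have h1 : c * s = s := hcm s hs
  have h2 : (c * c) * s = s := by rw [mul_assoc, h1, h1]
  rw [hcc, zero_mul] at h2
  exact hs0 h2.symm
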